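/- arXiv:1701.09176 — 5 statements merged into one kernel-verified Lean document; each statement's English description precedes it below -/
import Mathlib

section
/- For every real u with u > 1, lim_{R → ∞} (1/(2π)) ∫_{−R}^{R} u^{1/4 − iη} / (1/4 − iη) dη = 1, and for every real u with 0 < u < 1 the same limit equals 0. Equivalently, the principal-value contour integral (1/(2πi)) ∫_γ u^{−s}/(−s) ds along the vertical line γ = {−1/4 + iη : η ∈ ℝ} equals 1 for u > 1 and 0 for 0 < u < 1 (Perron's formula). -/
open MeasureTheory intervalIntegral

open Set Filter

lemma expIic {b : ℝ} (hb : 0 < b) (L : ℝ) :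
    IntegrableOn (fun t : ℝ => Real.exp (b * t)) (Set.Iic L) := by
  have h1 : IntegrableOn (fun x : ℝ => Real.exp (-(b * x))) (Set.Ioi (-L)) := by
    simpa [neg_mul] using exp_neg_integrableOn_Ioi (-L) hb
  have h2 := (integrable_indicator_iff measurableSet_Ioi).mpr h1
  have h3 := h2.comp_neg
  have h4 : ((Set.Ioi (-L)).indicator (fun x : ℝ => Real.exp (-(b * x))) ∘ Neg.neg)
      = (Set.Iio L).indicator (fun t : ℝ => Real.exp (b * t)) := by
    funext t
    by_cases ht : t < L
    · simp [Set.indicator_of_mem, ht, neg_lt_neg ht, Function.comp]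
    · have : ¬ (-t ∈ Set.Ioi (-L)) := by simpa using ht
      simp [Function.comp, Set.indicator_of_notMem, this, ht]
  rw [show (fun t : ℝ => (Set.Ioi (-L)).indicator (fun x : ℝ => Real.exp (-(b * x))) (-t)) = ((Set.Ioi (-L)).indicator (fun x : ℝ => Real.exp (-(b * x))) ∘ Neg.neg) from rfl, h4] at h3
  have h5 : IntegrableOn (fun t : ℝ => Real.exp (b * t)) (Set.Iio L) :=
    (integrable_indicator_iff measurableSet_Iio).mp h3
  exact (integrableOn_Iic_iff_integrableOn_Iio).mpr h5

lemma expCIic {c : ℂ} (hc : 0 < c.re) (L : ℝ) :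
    IntegrableOn (fun t : ℝ => Complex.exp (c * t)) (Set.Iic L) := by
  refine Integrable.mono' (expIic hc L) ?_ ?_
  · exact ((Complex.continuous_exp.comp (continuous_const.mul Complex.continuous_ofReal)).aestronglyMeasurable)
  · filter_upwards with t
    simp [Complex.norm_exp]

lemma integral_expC_Iic {c : ℂ} (hc : 0 < c.re) (L : ℝ) :
    ∫ t in Set.Iic L, Complex.exp (c * t) = Complex.exp (c * L) / c := by
  have hc0 : c ≠ 0 := fun h => by simp [h] at hc
  refine tendsto_nhds_unique
    (intervalIntegral_tendsto_integral_Iic L (expCIic hc L) tendsto_id) ?_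
  have key : ∀ y : ℝ, (∫ t in y..L, Complex.exp (c * t)) =
      (Complex.exp (c * L) - Complex.exp (c * y)) / c := by
    intro y; rw [integral_exp_mul_complex hc0]
  simp_rw [key]
  have h0 : Tendsto (fun y : ℝ => Complex.exp (c * y)) atBot (nhds 0) := by
    rw [tendsto_zero_iff_norm_tendsto_zero]
    have : ∀ y : ℝ, ‖Complex.exp (c * y)‖ = Real.exp (c.re * y) := by
      intro y; simp [Complex.norm_exp]
    simp_rw [this]
    exact Real.tendsto_exp_atBot.comp (tendsto_id.const_mul_atBot hc)
  have := (Tendsto.sub (tendsto_const_nhds (x := Complex.exp (c * L))) h0).div_const c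
  simpa [id] using this

lemma expCIoi {c : ℂ} (hc : c.re < 0) :
    IntegrableOn (fun t : ℝ => Complex.exp (c * t)) (Set.Ioi 0) := by
  refine Integrable.mono' (g := fun t : ℝ => Real.exp (-(-c.re) * t))
    (exp_neg_integrableOn_Ioi 0 (by linarith)) ?_ ?_
  · exact ((Complex.continuous_exp.comp (continuous_const.mul Complex.continuous_ofReal)).aestronglyMeasurable)
  · filter_upwards with t
    simp [Complex.norm_exp]

lemma integral_expC_Ioi {c : ℂ} (hc : c.re < 0) :
    ∫ t in Set.Ioi (0:ℝ), Complex.exp (c * t) = -1 / c := by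
  have hc0 : c ≠ 0 := fun h => by simp [h] at hc
  refine tendsto_nhds_unique
    (intervalIntegral_tendsto_integral_Ioi 0 (expCIoi hc) tendsto_id) ?_
  have key : ∀ y : ℝ, (∫ t in (0:ℝ)..y, Complex.exp (c * t)) =
      (Complex.exp (c * y) - 1) / c := by
    intro y; rw [integral_exp_mul_complex hc0]; simp
  simp_rw [key]
  have h0 : Tendsto (fun y : ℝ => Complex.exp (c * y)) atTop (nhds 0) := by
    rw [tendsto_zero_iff_norm_tendsto_zero]
    have : ∀ y : ℝ, ‖Complex.exp (c * y)‖ = Real.exp (c.re * y) := by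
      intro y; simp [Complex.norm_exp]
    simp_rw [this]
    exact Real.tendsto_exp_atBot.comp ((tendsto_const_mul_atBot_of_neg hc).mpr tendsto_id)
  have := (Tendsto.sub h0 (tendsto_const_nhds (x := (1:ℂ)))).div_const c
  simpa [id, zero_sub, neg_div] using this

lemma hcre (η : ℝ) : ((1/4:ℂ) - Complex.I * η).re = 1/4 := by simp

lemma inner_eta (R t : ℝ) (ht : t ≠ 0) :
    (∫ η in -R..R, Complex.exp (((1/4:ℂ) - Complex.I * η) * t))
    = ((2 * Real.exp (t/4) * Real.sin (R*t) / t : ℝ) : ℂ) := by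
  have key : ∀ η : ℝ, Complex.exp (((1/4:ℂ) - Complex.I * η) * t)
      = Complex.exp ((t:ℂ)/4) * Complex.exp ((-(Complex.I*t)) * η) := by
    intro η; rw [← Complex.exp_add]; ring_nf
  simp_rw [key]
  rw [intervalIntegral.integral_const_mul,
    integral_exp_mul_complex (by simp [Complex.ext_iff, ht] : -(Complex.I*(t:ℂ)) ≠ 0)]
  have hsin : Complex.exp (-(Complex.I*t)*R) - Complex.exp (-(Complex.I*t)*(-R))
      = -(2*Complex.I*Complex.sin ((t:ℂ)*R)) := by
    rw [Complex.sin]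
    rw [show -(Complex.I*(t:ℂ))*(R:ℂ) = -((t:ℂ)*R*Complex.I) by ring,
        show -(Complex.I*(t:ℂ))*(-(R:ℂ)) = (t:ℂ)*R*Complex.I by ring]
    rw [show (-(↑t * ↑R):ℂ) * Complex.I = -(↑t*↑R*Complex.I) by ring]
    ring_nf
    rw [Complex.I_sq]
    ring
  push_cast
  rw [hsin]
  have htc : (t:ℂ) ≠ 0 := by exact_mod_cast ht
  push_cast [Complex.ofReal_exp, Complex.ofReal_sin]
  rw [show ((t:ℂ)*R) = ((R:ℂ)*t) by ring]
  field_simp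


lemma ae_ne_zero : ∀ᵐ t : ℝ, t ≠ 0 := by
  have h0 : (volume : Measure ℝ) {0} = 0 := measure_singleton 0
  rw [ae_iff]
  simpa [not_not, Set.setOf_eq_eq_singleton] using h0

lemma fubini_step (L R : ℝ) (hR : 0 < R) :
    (∫ η in -R..R, Complex.exp (((1/4:ℂ) - Complex.I * η) * L) / ((1/4:ℂ) - Complex.I * η))
    = ((∫ t in Set.Iic L, 2 * Real.exp (t/4) * Real.sin (R*t) / t : ℝ) : ℂ) := by
  have hre : ∀ η : ℝ, (0:ℝ) < ((1/4:ℂ) - Complex.I * η).re := by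
    intro η; rw [hcre]; norm_num
  have step1 : ∀ η : ℝ, Complex.exp (((1/4:ℂ) - Complex.I * η) * L) / ((1/4:ℂ) - Complex.I * η)
      = ∫ t in Set.Iic L, Complex.exp (((1/4:ℂ) - Complex.I * η) * t) :=
    fun η => (integral_expC_Iic (hre η) L).symm
  simp_rw [step1]
  rw [intervalIntegral.integral_of_le (by linarith : -R ≤ R)]
  have hcont : Continuous (fun z : ℝ × ℝ => Complex.exp (((1/4:ℂ) - Complex.I * z.1) * z.2)) := by
    fun_prop
  have hInt : Integrable (fun z : ℝ × ℝ => Complex.exp (((1/4:ℂ) - Complex.I * z.1) * z.2))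
      ((volume.restrict (Set.Ioc (-R) R)).prod (volume.restrict (Set.Iic L))) := by
    rw [MeasureTheory.integrable_prod_iff hcont.aestronglyMeasurable]
    constructor
    · filter_upwards with η
      exact expCIic (hre η) L
    · have hnorm : ∀ η : ℝ, (∫ t in Set.Iic L, ‖Complex.exp (((1/4:ℂ) - Complex.I * η) * t)‖)
          = ∫ t in Set.Iic L, Real.exp ((1/4) * t) := by
        intro η
        refine integral_congr_ae (Filter.Eventually.of_forall fun t => ?_)
        simp [Complex.norm_exp]
      simp_rw [hnorm]
      exact integrableOn_const measure_Ioc_lt_top.ne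
  have swap := MeasureTheory.integral_integral_swap
    (f := fun (η : ℝ) (t : ℝ) => Complex.exp (((1/4:ℂ) - Complex.I * η) * t)) hInt
  rw [swap]
  have step2 : ∀ᵐ (t : ℝ) ∂(volume.restrict (Set.Iic L)),
      (∫ η in Set.Ioc (-R) R, Complex.exp (((1/4:ℂ) - Complex.I * η) * t))
      = ((2 * Real.exp (t/4) * Real.sin (R*t) / t : ℝ) : ℂ) := by
    filter_upwards [ae_restrict_of_ae ae_ne_zero] with t ht
    rw [← intervalIntegral.integral_of_le (by linarith : -R ≤ R)]
    exact inner_eta R t ht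
  rw [integral_congr_ae step2]
  exact _root_.integral_ofReal

lemma int_exp_neg_abs : Integrable (fun t : ℝ => Real.exp (-|t|)) := by
  have h1 : IntegrableOn (fun t : ℝ => Real.exp (-|t|)) (Set.Iic 0) := by
    refine (integrableOn_exp_Iic 0).congr_fun ?_ measurableSet_Iic
    intro t ht
    simp only [Set.mem_Iic] at ht
    simp [abs_of_nonpos ht]
  have h2 : IntegrableOn (fun t : ℝ => Real.exp (-|t|)) (Set.Ioi 0) := by
    refine (exp_neg_integrableOn_Ioi 0 one_pos).congr_fun ?_ measurableSet_Ioi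
    intro t ht
    simp only [Set.mem_Ioi] at ht
    simp [abs_of_pos ht]
  have h3 := h1.union h2
  rwa [Set.Iic_union_Ioi, integrableOn_univ] at h3

lemma cosIic (R : ℝ) :
    ∫ t in Set.Iic (0:ℝ), Real.exp t * Real.cos (R*t) = 1/(1+R^2) := by
  have hre : (0:ℝ) < ((1:ℂ) + Complex.I*R).re := by simp
  have h1 := integral_expC_Iic hre 0
  have h2 := integral_re (expCIic hre 0)
  simp only [RCLike.re_to_complex] at h2
  have h3 : ∀ t : ℝ, (Complex.exp (((1:ℂ) + Complex.I*R) * t)).re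
      = Real.exp t * Real.cos (R*t) := by
    intro t
    rw [Complex.exp_re]
    congr 2 <;> simp [mul_comm]
  rw [show (∫ t in Set.Iic (0:ℝ), Real.exp t * Real.cos (R*t))
      = ∫ t in Set.Iic (0:ℝ), (Complex.exp (((1:ℂ) + Complex.I*R) * t)).re from
    integral_congr_ae (Filter.Eventually.of_forall fun t => (h3 t).symm), h2, h1]
  simp [Complex.div_re, Complex.normSq_apply]
  ring_nf

lemma cosIoi (R : ℝ) :
    ∫ t in Set.Ioi (0:ℝ), Real.exp (-t) * Real.cos (R*t) = 1/(1+R^2) := by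
  have hre : ((-1:ℂ) + Complex.I*R).re < 0 := by simp
  have h1 := integral_expC_Ioi hre
  have h2 := integral_re (expCIoi hre)
  simp only [RCLike.re_to_complex] at h2
  have h3 : ∀ t : ℝ, (Complex.exp (((-1:ℂ) + Complex.I*R) * t)).re
      = Real.exp (-t) * Real.cos (R*t) := by
    intro t
    rw [Complex.exp_re]
    congr 2 <;> simp [mul_comm]
  rw [show (∫ t in Set.Ioi (0:ℝ), Real.exp (-t) * Real.cos (R*t))
      = ∫ t in Set.Ioi (0:ℝ), (Complex.exp (((-1:ℂ) + Complex.I*R) * t)).re from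
    integral_congr_ae (Filter.Eventually.of_forall fun t => (h3 t).symm), h2, h1]
  simp [Complex.div_re, Complex.normSq_apply]
  ring_nf

lemma K_deriv (x₀ : ℝ) :
    HasDerivAt (fun x : ℝ => ∫ t : ℝ, 2 * Real.exp (-|t|) * Real.sin (x*t) / t)
      (4/(1+x₀^2)) x₀ := by
  have hmeas : ∀ x : ℝ, AEStronglyMeasurable (fun t : ℝ => 2 * Real.exp (-|t|) * Real.sin (x*t) / t) volume := by
    intro x
    exact (((by fun_prop : Continuous (fun t : ℝ => 2 * Real.exp (-|t|) * Real.sin (x*t))).measurable.div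
      measurable_id).aestronglyMeasurable)
  have key := hasDerivAt_integral_of_dominated_loc_of_deriv_le (x₀ := x₀) (s := Metric.ball x₀ 1)
    (F := fun x t => 2 * Real.exp (-|t|) * Real.sin (x*t) / t)
    (F' := fun x t => 2 * Real.exp (-|t|) * Real.cos (x*t))
    (bound := fun t => 2 * Real.exp (-|t|)) (Metric.ball_mem_nhds x₀ one_pos)
    (Filter.Eventually.of_forall fun x => hmeas x)
    ?_ ?_ ?_ ?_ ?_
  · have hval : (∫ t : ℝ, 2 * Real.exp (-|t|) * Real.cos (x₀*t)) = 4/(1+x₀^2) := by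
      have hi1 : IntegrableOn (fun t : ℝ => 2 * Real.exp (-|t|) * Real.cos (x₀*t)) (Set.Iic 0) := by
        refine Integrable.mono' ((int_exp_neg_abs.const_mul 2).integrableOn) ?_ ?_
        · exact (by fun_prop : Continuous (fun t : ℝ => 2 * Real.exp (-|t|) * Real.cos (x₀*t))).aestronglyMeasurable
        · filter_upwards with t
          rw [Real.norm_eq_abs, abs_mul, abs_mul, abs_two, abs_of_pos (Real.exp_pos _)]
          have := Real.abs_cos_le_one (x₀*t)
          nlinarith [Real.exp_pos (-|t|)]
      have hi2 : IntegrableOn (fun t : ℝ => 2 * Real.exp (-|t|) * Real.cos (x₀*t)) (Set.Ioi 0) := by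
        refine Integrable.mono' ((int_exp_neg_abs.const_mul 2).integrableOn) ?_ ?_
        · exact (by fun_prop : Continuous (fun t : ℝ => 2 * Real.exp (-|t|) * Real.cos (x₀*t))).aestronglyMeasurable
        · filter_upwards with t
          rw [Real.norm_eq_abs, abs_mul, abs_mul, abs_two, abs_of_pos (Real.exp_pos _)]
          have := Real.abs_cos_le_one (x₀*t)
          nlinarith [Real.exp_pos (-|t|)]
      rw [← integral_Iic_add_Ioi hi1 hi2]
      have e1 : (∫ t in Set.Iic (0:ℝ), 2 * Real.exp (-|t|) * Real.cos (x₀*t))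
          = 2 * (1/(1+x₀^2)) := by
        rw [← cosIic x₀, ← MeasureTheory.integral_const_mul]
        refine setIntegral_congr_fun measurableSet_Iic fun t ht => ?_
        simp only [Set.mem_Iic] at ht
        rw [abs_of_nonpos ht, neg_neg]
        ring
      have e2 : (∫ t in Set.Ioi (0:ℝ), 2 * Real.exp (-|t|) * Real.cos (x₀*t))
          = 2 * (1/(1+x₀^2)) := by
        rw [← cosIoi x₀, ← MeasureTheory.integral_const_mul]
        refine setIntegral_congr_fun measurableSet_Ioi fun t ht => ?_
        simp only [Set.mem_Ioi] at ht
        rw [abs_of_pos ht]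
        ring
      rw [e1, e2]; ring
    rw [← hval]
    exact key.2
  · -- integrability of F x₀
    refine Integrable.mono' ((int_exp_neg_abs.const_mul (2*|x₀|))) (hmeas x₀) ?_
    filter_upwards with t
    rw [Real.norm_eq_abs]
    by_cases ht : t = 0
    · simp [ht]
    · rw [abs_div, abs_mul, abs_mul, abs_two, abs_of_pos (Real.exp_pos _),
        div_le_iff₀ (abs_pos.mpr ht)]
      have h1 : |Real.sin (x₀*t)| ≤ |x₀| * |t| := (Real.abs_sin_le_abs).trans (le_of_eq (abs_mul _ _))
      nlinarith [Real.exp_pos (-|t|), abs_nonneg t, abs_nonneg x₀, abs_nonneg (Real.sin (x₀*t))]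
  · exact (by fun_prop : Continuous (fun t : ℝ => 2 * Real.exp (-|t|) * Real.cos (x₀*t))).aestronglyMeasurable
  · filter_upwards with t
    intro x _
    rw [Real.norm_eq_abs, abs_mul, abs_mul, abs_two, abs_of_pos (Real.exp_pos _)]
    have := Real.abs_cos_le_one (x*t)
    nlinarith [Real.exp_pos (-|t|)]
  · exact int_exp_neg_abs.const_mul 2
  · filter_upwards [ae_ne_zero] with t ht
    intro x _
    have H := (((Real.hasDerivAt_sin (x*t)).comp x ((hasDerivAt_id x).mul_const t)).const_mul
      (2*Real.exp (-|t|)/t))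
    refine HasDerivAt.congr_of_eventuallyEq (H.congr_deriv ?_) (Filter.Eventually.of_forall fun y => ?_)
    · rw [one_mul, mul_comm (Real.cos _) t, ← mul_assoc, div_mul_cancel₀ _ ht]
    · simp only [Function.comp, id]
      ring

lemma K_eq (R : ℝ) :
    (∫ t : ℝ, 2 * Real.exp (-|t|) * Real.sin (R*t) / t) = 4 * Real.arctan R := by
  set K := fun x : ℝ => ∫ t : ℝ, 2 * Real.exp (-|t|) * Real.sin (x*t) / t with hK
  have hd : ∀ x : ℝ, HasDerivAt (fun x => K x - 4 * Real.arctan x) 0 x := by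
    intro x
    have := (K_deriv x).sub ((Real.hasDerivAt_arctan x).const_mul 4)
    have h0 : 4/(1+x^2) - 4 * (1/(1+x^2)) = 0 := by ring
    rwa [h0] at this
  have hconst := is_const_of_deriv_eq_zero (f := fun x => K x - 4 * Real.arctan x)
    (fun z => (hd z).differentiableAt) (fun z => (hd z).deriv) R 0
  have h0 : K 0 = 0 := by simp [hK]
  rw [h0, Real.arctan_zero] at hconst
  linarith

lemma RL {f : ℝ → ℝ} (hf : Integrable f) :
    Filter.Tendsto (fun R : ℝ => ∫ t : ℝ, f t * Real.sin (R*t)) Filter.atTop (nhds 0) := by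
  have hg : Integrable (fun t : ℝ => (f t : ℂ)) := hf.ofReal
  have hmap : Tendsto (fun R : ℝ => -R / (2*Real.pi)) atTop (cocompact ℝ) := by
    rw [cocompact_eq_atBot_atTop]
    refine Tendsto.mono_right ?_ le_sup_left
    have : (fun R : ℝ => -R / (2*Real.pi)) = fun R : ℝ => (-(1/(2*Real.pi))) * R := by
      funext R; field_simp
    rw [this]
    exact (tendsto_const_mul_atBot_of_neg (neg_lt_zero.mpr (by positivity))).mpr tendsto_id
  have h1 := (Real.zero_at_infty_fourier (fun t : ℝ => (f t : ℂ))).comp hmap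
  have h2 : ∀ R : ℝ, FourierTransform.fourier (fun t : ℝ => (f t : ℂ)) (-R/(2*Real.pi))
      = ∫ t : ℝ, (f t : ℂ) * Complex.exp (Complex.I * R * t) := by
    intro R
    rw [Real.fourier_real_eq_integral_exp_smul]
    refine integral_congr_ae (Filter.Eventually.of_forall fun t => ?_)
    simp only [smul_eq_mul]
    rw [mul_comm]
    have harg : -2 * Real.pi * t * (-R / (2*Real.pi)) = t * R := by
      field_simp
    rw [harg]
    congr 1
    push_cast
    ring
  have hint : ∀ R : ℝ, Integrable (fun t : ℝ => (f t : ℂ) * Complex.exp (Complex.I * R * t)) := by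
    intro R
    refine Integrable.mono' hf.norm
      (hg.aestronglyMeasurable.mul (by fun_prop : Continuous fun t : ℝ => Complex.exp (Complex.I * R * t)).aestronglyMeasurable) ?_
    filter_upwards with t
    rw [norm_mul]
    have he : ‖Complex.exp (Complex.I * R * t)‖ = 1 := by
      rw [Complex.norm_exp]
      simp [Complex.mul_re]
    rw [he, mul_one]
    simp
  have h3 : ∀ R : ℝ, (∫ t : ℝ, f t * Real.sin (R*t))
      = (∫ t : ℝ, (f t : ℂ) * Complex.exp (Complex.I * R * t)).im := by
    intro R
    have him := integral_im (hint R)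
    simp only [RCLike.im_to_complex] at him
    rw [← him]
    refine integral_congr_ae (Filter.Eventually.of_forall fun t => ?_)
    show f t * Real.sin (R * t) = ((f t : ℂ) * Complex.exp (Complex.I * (R:ℂ) * (t:ℂ))).im
    have harg : Complex.I * (R:ℂ) * (t:ℂ) = ((R*t : ℝ) : ℂ) * Complex.I := by push_cast; ring
    rw [harg]
    simp [Complex.mul_im, ← Complex.ofReal_mul, Complex.exp_ofReal_mul_I_im]
  simp_rw [h3]
  have h4 : Tendsto (fun R : ℝ => ∫ t : ℝ, (f t : ℂ) * Complex.exp (Complex.I * R * t)) atTop (nhds 0) := by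
    refine h1.congr fun R => ?_
    exact h2 R
  have := (Complex.continuous_im.tendsto 0).comp h4
  simpa [Function.comp_def] using this

lemma exp_sub_exp_le {x y : ℝ} (h : y ≤ x) :
    Real.exp x - Real.exp y ≤ (x - y) * Real.exp x := by
  have h1 := Real.add_one_le_exp (y - x)
  have hxy : Real.exp y = Real.exp x * Real.exp (y - x) := by
    rw [← Real.exp_add]; ring_nf
  nlinarith [Real.exp_pos x, Real.exp_pos (y-x)]

lemma int_k_sin (R : ℝ) :
    Integrable (fun t : ℝ => 2 * Real.exp (-|t|) * Real.sin (R*t) / t) := by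
  have hmeas : AEStronglyMeasurable (fun t : ℝ => 2 * Real.exp (-|t|) * Real.sin (R*t) / t) volume :=
    (((by fun_prop : Continuous (fun t : ℝ => 2 * Real.exp (-|t|) * Real.sin (R*t))).measurable.div
      measurable_id).aestronglyMeasurable)
  refine Integrable.mono' ((int_exp_neg_abs.const_mul (2*|R|))) hmeas ?_
  filter_upwards with t
  rw [Real.norm_eq_abs]
  by_cases ht : t = 0
  · simp [ht]
  · rw [abs_div, abs_mul, abs_mul, abs_two, abs_of_pos (Real.exp_pos _),
      div_le_iff₀ (abs_pos.mpr ht)]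
    have h1 : |Real.sin (R*t)| ≤ |R| * |t| := (Real.abs_sin_le_abs).trans (le_of_eq (abs_mul _ _))
    nlinarith [Real.exp_pos (-|t|), abs_nonneg t, abs_nonneg R, abs_nonneg (Real.sin (R*t))]

lemma S_neg {L : ℝ} (hL : L < 0) :
    Filter.Tendsto (fun R : ℝ => ∫ t in Set.Iic L, 2 * Real.exp (t/4) * Real.sin (R*t) / t)
      Filter.atTop (nhds 0) := by
  set p : ℝ → ℝ := fun t => Set.indicator (Set.Iic L) (fun t => 2 * Real.exp (t/4) / t) t with hp
  have hrw : ∀ R : ℝ, (∫ t in Set.Iic L, 2 * Real.exp (t/4) * Real.sin (R*t) / t)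
      = ∫ t : ℝ, p t * Real.sin (R*t) := by
    intro R
    rw [← MeasureTheory.integral_indicator measurableSet_Iic]
    refine integral_congr_ae (Filter.Eventually.of_forall fun t => ?_)
    by_cases ht : t ∈ Set.Iic L
    · simp only [hp, Set.indicator_of_mem ht]
      ring
    · simp [hp, Set.indicator_of_notMem ht]
  simp_rw [hrw]
  refine RL ?_
  rw [hp, integrable_indicator_iff measurableSet_Iic]
  have hb : IntegrableOn (fun t : ℝ => (2/(-L)) * Real.exp ((1/4) * t)) (Set.Iic L) :=
    (expIic (by norm_num) L).const_mul _
  refine Integrable.mono' hb ?_ ?_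
  · exact (((by fun_prop : Continuous (fun t : ℝ => 2 * Real.exp (t/4))).measurable.div
      measurable_id).aestronglyMeasurable).restrict
  · refine (ae_restrict_iff' measurableSet_Iic).mpr (Filter.Eventually.of_forall fun t ht => ?_)
    simp only [Set.mem_Iic] at ht
    have ht0 : t < 0 := lt_of_le_of_lt ht hL
    rw [Real.norm_eq_abs, abs_div, abs_mul, abs_two, abs_of_pos (Real.exp_pos _),
      abs_of_neg ht0, div_le_iff₀ (by linarith)]
    have h1 : Real.exp (t/4) = Real.exp ((1/4)*t) := by ring_nf
    rw [h1]
    have h3 : (2:ℝ) ≤ 2/(-L) * (-t) := by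
      rw [div_mul_eq_mul_div, le_div_iff₀ (by linarith : (0:ℝ) < -L)]
      nlinarith
    nlinarith [Real.exp_pos ((1/4)*t)]

lemma S_pos {L : ℝ} (hL : 0 < L) :
    Filter.Tendsto (fun R : ℝ => ∫ t in Set.Iic L, 2 * Real.exp (t/4) * Real.sin (R*t) / t)
      Filter.atTop (nhds (2*Real.pi)) := by
  set p : ℝ → ℝ := fun t => Set.indicator (Set.Iic L) (fun t => 2 * Real.exp (t/4) / t) t with hp
  set k : ℝ → ℝ := fun t => 2 * Real.exp (-|t|) / t with hk
  have hrw : ∀ R : ℝ, (∫ t in Set.Iic L, 2 * Real.exp (t/4) * Real.sin (R*t) / t)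
      = ∫ t : ℝ, p t * Real.sin (R*t) := by
    intro R
    rw [← MeasureTheory.integral_indicator measurableSet_Iic]
    refine integral_congr_ae (Filter.Eventually.of_forall fun t => ?_)
    by_cases ht : t ∈ Set.Iic L
    · simp only [hp, Set.indicator_of_mem ht]; ring
    · simp [hp, Set.indicator_of_notMem ht]
  have hpmeas : Measurable p := by
    refine Measurable.indicator ?_ measurableSet_Iic
    exact (by fun_prop : Continuous (fun t : ℝ => 2 * Real.exp (t/4))).measurable.div measurable_id
  have hkmeas : Measurable k := by
    exact (by fun_prop : Continuous (fun t : ℝ => 2 * Real.exp (-|t|))).measurable.div measurable_id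
  -- integrability of p - k
  have hh : Integrable (fun t : ℝ => p t - k t) := by
    have hmeas : AEStronglyMeasurable (fun t : ℝ => p t - k t) volume :=
      (hpmeas.sub hkmeas).aestronglyMeasurable
    have piece1 : IntegrableOn (fun t : ℝ => p t - k t) (Set.Iic 0) := by
      refine Integrable.mono' ((expIic (by norm_num : (0:ℝ) < 1/4) 0).const_mul 2) hmeas.restrict ?_
      refine (ae_restrict_iff' measurableSet_Iic).mpr (Filter.Eventually.of_forall fun t ht => ?_)
      simp only [Set.mem_Iic] at ht
      have htL : t ∈ Set.Iic L := Set.mem_Iic.mpr (le_trans ht hL.le)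
      have hpe : p t = 2 * Real.exp (t/4) / t := by simp only [hp, Set.indicator_of_mem htL]
      have hke : k t = 2 * Real.exp t / t := by
        simp only [hk, abs_of_nonpos ht, neg_neg]
      rw [Real.norm_eq_abs, hpe, hke]
      rcases eq_or_lt_of_le ht with h0 | h0
      · subst h0
        simp
      · have hnum : 0 ≤ 2 * Real.exp (t/4) - 2 * Real.exp t := by
          have := Real.exp_le_exp.mpr (show t ≤ t/4 by linarith)
          linarith
        have heq : 2 * Real.exp (t/4) / t - 2 * Real.exp t / t
            = (2 * Real.exp (t/4) - 2 * Real.exp t) / t := by ring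
        rw [heq, abs_div, abs_of_nonneg hnum, abs_of_neg h0, div_le_iff₀ (by linarith)]
        have hkey := exp_sub_exp_le (show t ≤ t/4 by linarith)
        have h14 : Real.exp ((1/4)*t) = Real.exp (t/4) := by ring_nf
        rw [h14]
        nlinarith [Real.exp_pos (t/4)]
    have piece2 : IntegrableOn (fun t : ℝ => p t - k t) (Set.Ioc 0 L) := by
      refine Integrable.mono' (g := fun _ : ℝ => (5/2) * Real.exp (L/4))
        (integrableOn_const measure_Ioc_lt_top.ne) hmeas.restrict ?_
      refine (ae_restrict_iff' measurableSet_Ioc).mpr (Filter.Eventually.of_forall fun t ht => ?_)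
      obtain ⟨ht0, htL⟩ := ht
      have hpe : p t = 2 * Real.exp (t/4) / t := by
        simp only [hp, Set.indicator_of_mem (Set.mem_Iic.mpr htL)]
      have hke : k t = 2 * Real.exp (-t) / t := by
        simp only [hk, abs_of_pos ht0]
      rw [Real.norm_eq_abs, hpe, hke]
      have hnum : 0 ≤ 2 * Real.exp (t/4) - 2 * Real.exp (-t) := by
        have := Real.exp_le_exp.mpr (show -t ≤ t/4 by linarith)
        linarith
      have heq : 2 * Real.exp (t/4) / t - 2 * Real.exp (-t) / t
          = (2 * Real.exp (t/4) - 2 * Real.exp (-t)) / t := by ring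
      rw [heq, abs_div, abs_of_nonneg hnum, abs_of_pos ht0, div_le_iff₀ ht0]
      have hkey := exp_sub_exp_le (show -t ≤ t/4 by linarith)
      have hmono : Real.exp (t/4) ≤ Real.exp (L/4) :=
        Real.exp_le_exp.mpr (by linarith)
      nlinarith [Real.exp_pos (t/4), Real.exp_pos (L/4)]
    have piece3 : IntegrableOn (fun t : ℝ => p t - k t) (Set.Ioi L) := by
      refine Integrable.mono' (g := fun t : ℝ => (2/L) * Real.exp (-1 * t))
        ((exp_neg_integrableOn_Ioi L one_pos).const_mul _) hmeas.restrict ?_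
      refine (ae_restrict_iff' measurableSet_Ioi).mpr (Filter.Eventually.of_forall fun t ht => ?_)
      simp only [Set.mem_Ioi] at ht
      have ht0 : 0 < t := lt_trans hL ht
      have hpe : p t = 0 := by
        simp only [hp, Set.indicator_of_notMem (by simp [Set.mem_Iic]; linarith : t ∉ Set.Iic L)]
      have hke : k t = 2 * Real.exp (-t) / t := by
        simp only [hk, abs_of_pos ht0]
      rw [Real.norm_eq_abs, hpe, hke, zero_sub, abs_neg, abs_div, abs_of_pos ht0,
        abs_of_nonneg (by positivity : (0:ℝ) ≤ 2 * Real.exp (-t)), div_le_iff₀ ht0]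
      have h3 : (2:ℝ) ≤ 2/L * t := by
        rw [div_mul_eq_mul_div, le_div_iff₀ hL]
        nlinarith
      simp only [neg_one_mul]
      nlinarith [Real.exp_pos (-t)]
    have hu : IntegrableOn (fun t : ℝ => p t - k t) (Set.Iic 0 ∪ (Set.Ioc 0 L ∪ Set.Ioi L)) :=
      piece1.union (piece2.union piece3)
    rwa [Set.Ioc_union_Ioi_eq_Ioi hL.le, Set.Iic_union_Ioi, integrableOn_univ] at hu
  -- splitting
  have hint2 : ∀ R : ℝ, Integrable (fun t : ℝ => k t * Real.sin (R*t)) := by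
    intro R
    refine (int_k_sin R).congr (Filter.Eventually.of_forall fun t => ?_)
    rw [hk]; ring_nf
  have hint1 : ∀ R : ℝ, Integrable (fun t : ℝ => (p t - k t) * Real.sin (R*t)) := by
    intro R
    refine Integrable.mono' hh.norm ((hh.aestronglyMeasurable.mul
      (by fun_prop : Continuous fun t : ℝ => Real.sin (R*t)).aestronglyMeasurable)) ?_
    filter_upwards with t
    simp only [Real.norm_eq_abs, abs_mul, abs_abs]
    exact mul_le_of_le_one_right (abs_nonneg _) (Real.abs_sin_le_one (R*t))
  have hsplit : ∀ R : ℝ, (∫ t : ℝ, p t * Real.sin (R*t))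
      = (∫ t : ℝ, (p t - k t) * Real.sin (R*t)) + ∫ t : ℝ, k t * Real.sin (R*t) := by
    intro R
    rw [← integral_add (hint1 R) (hint2 R)]
    refine integral_congr_ae (Filter.Eventually.of_forall fun t => ?_)
    ring
  have hKval : ∀ R : ℝ, (∫ t : ℝ, k t * Real.sin (R*t)) = 4 * Real.arctan R := by
    intro R
    rw [← K_eq R]
    refine integral_congr_ae (Filter.Eventually.of_forall fun t => ?_)
    rw [hk]; ring_nf
  have hRL := RL hh
  have harctan : Filter.Tendsto (fun R : ℝ => 4 * Real.arctan R) Filter.atTop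
      (nhds (2*Real.pi)) := by
    have := (Real.tendsto_arctan_atTop.mono_right nhdsWithin_le_nhds).const_mul (4:ℝ)
    convert this using 2
    ring
  have := hRL.add harctan
  rw [zero_add] at this
  refine Filter.Tendsto.congr (fun R => ?_) this
  rw [hrw R, hsplit R, hKval R]

/-- **Perron's formula** along the vertical line `γ = {-1/4 + iη : η ∈ ℝ}`:
the principal-value integral `(1/(2πi)) ∫_γ u^{-s}/(-s) ds
  = lim_{R→∞} (1/(2π)) ∫_{-R}^R u^{1/4-iη}/(1/4-iη) dη`
equals `1` for `u > 1` and `0` for `0 < u < 1`, where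
`u^{1/4-iη} = exp((1/4-iη) log u)`. -/
theorem perron_formula (u : ℝ) (hu : 0 < u) :
    (1 < u → Filter.Tendsto
      (fun R : ℝ => (1 / (2 * (Real.pi : ℂ))) * ∫ η in -R..R,
        Complex.exp (((1 / 4 : ℂ) - Complex.I * (η : ℂ)) * (Real.log u : ℂ)) /
          ((1 / 4 : ℂ) - Complex.I * (η : ℂ)))
      Filter.atTop (nhds 1)) ∧
    (u < 1 → Filter.Tendsto
      (fun R : ℝ => (1 / (2 * (Real.pi : ℂ))) * ∫ η in -R..R,
        Complex.exp (((1 / 4 : ℂ) - Complex.I * (η : ℂ)) * (Real.log u : ℂ)) /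
          ((1 / 4 : ℂ) - Complex.I * (η : ℂ)))
      Filter.atTop (nhds 0)) := by
  constructor
  · intro hu1
    have hL : 0 < Real.log u := Real.log_pos hu1
    have hcast : Filter.Tendsto (fun R : ℝ =>
        ((∫ t in Set.Iic (Real.log u), 2 * Real.exp (t/4) * Real.sin (R*t) / t : ℝ) : ℂ))
        Filter.atTop (nhds ((2*Real.pi : ℝ) : ℂ)) :=
      (Complex.continuous_ofReal.tendsto _).comp (S_pos hL)
    have hmul := hcast.const_mul (1 / (2 * (Real.pi : ℂ)))
    have hpi : (Real.pi : ℂ) ≠ 0 := by exact_mod_cast Real.pi_ne_zero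
    have hval : (1 / (2 * (Real.pi : ℂ))) * ((2*Real.pi : ℝ) : ℂ) = 1 := by
      push_cast
      field_simp
    rw [hval] at hmul
    refine Filter.Tendsto.congr' ?_ hmul
    filter_upwards [Filter.eventually_gt_atTop 0] with R hR
    rw [fubini_step (Real.log u) R hR]
  · intro hu2
    have hL : Real.log u < 0 := Real.log_neg hu hu2
    have hcast : Filter.Tendsto (fun R : ℝ =>
        ((∫ t in Set.Iic (Real.log u), 2 * Real.exp (t/4) * Real.sin (R*t) / t : ℝ) : ℂ))
        Filter.atTop (nhds ((0 : ℝ) : ℂ)) :=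
      (Complex.continuous_ofReal.tendsto _).comp (S_neg hL)
    have hmul := hcast.const_mul (1 / (2 * (Real.pi : ℂ)))
    have hval : (1 / (2 * (Real.pi : ℂ))) * ((0:ℝ) : ℂ) = 0 := by simp
    rw [hval] at hmul
    refine Filter.Tendsto.congr' ?_ hmul
    filter_upwards [Filter.eventually_gt_atTop 0] with R hR
    rw [fubini_step (Real.log u) R hR]
end

section
/- There is an absolute constant C > 0 such that for every real u > 1 and every R ≥ 1, the integral of u^{−s}/(−s) over the semicircular contour C_R = {−1/4 − i R e^{iφ} : 0 ≤ φ ≤ π} satisfies | ∫_{C_R} u^{−s}/(−s) ds | ≤ C u^{1/4} (1 − u^{−R/2}) / (R log u). Here the contour integral means ∫_0^π [u^{−s(φ)}/(−s(φ))] s′(φ) dφ with s(φ) = −1/4 − i R e^{iφ}. -/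
set_option maxHeartbeats 800000

open MeasureTheory

lemma int_exp_mul (k : ℝ) (hk : k ≠ 0) (a b : ℝ) :
    ∫ x in a..b, Real.exp (k * x) = (Real.exp (k * b) - Real.exp (k * a)) / k := by
  have h : ∀ x ∈ Set.uIcc a b, HasDerivAt (fun x => Real.exp (k * x) / k) (Real.exp (k * x)) x := by
    intro x _
    have h1 : HasDerivAt (fun x : ℝ => Real.exp (k * x)) (Real.exp (k * x) * k) x := by
      have h0 := (Real.hasDerivAt_exp (k * x)).comp x ((hasDerivAt_id x).const_mul k)
      rw [mul_one] at h0
      exact h0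
    simpa [mul_div_assoc, mul_div_cancel_right₀ _ hk] using h1.div_const k
  rw [intervalIntegral.integral_eq_sub_of_hasDerivAt h
    (Continuous.intervalIntegrable (by fun_prop) a b)]
  ring

/-- Bound on the integral of `u^{-s}/(-s)` over the semicircular contour
`C_R = {-1/4 - iRe^{iφ} : 0 ≤ φ ≤ π}`: there is an absolute constant `C > 0` such that
for all `u > 1` and `R ≥ 1`,
`|∫_{C_R} u^{-s}/(-s) ds| ≤ C u^{1/4} (1 - u^{-R/2})/(R log u)`.
The contour integral is `∫_0^π [u^{-s(φ)}/(-s(φ))] s'(φ) dφ` with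
`s(φ) = -1/4 - iRe^{iφ}` and hence `s'(φ) = Re^{iφ}`. -/
theorem semicircle_contour_bound :
    ∃ C > 0, ∀ u : ℝ, 1 < u → ∀ R : ℝ, 1 ≤ R →
      ‖∫ φ in (0 : ℝ)..Real.pi,
          Complex.exp (-(-(1 / 4) - Complex.I * (R : ℂ) * Complex.exp (Complex.I * (φ : ℂ))) *
              (Real.log u : ℂ)) /
            (-(-(1 / 4) - Complex.I * (R : ℂ) * Complex.exp (Complex.I * (φ : ℂ)))) *
            ((R : ℂ) * Complex.exp (Complex.I * (φ : ℂ)))‖ ≤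
        C * u ^ ((1 : ℝ) / 4) * (1 - u ^ (-R / 2)) / (R * Real.log u) := by
  refine ⟨9, by norm_num, fun u hu R hR => ?_⟩
  set L : ℝ := Real.log u with hLdef
  have hL : 0 < L := Real.log_pos hu
  have hRpos : (0 : ℝ) < R := lt_of_lt_of_le one_pos hR
  set A : ℝ := R * L with hAdef
  have hA : 0 < A := mul_pos hRpos hL
  have hπ := Real.pi_pos
  set K : ℝ := (4 / 3) * Real.exp (L / 4) with hKdef
  have hK : 0 < K := by positivity
  set g : ℝ → ℝ := fun φ => K * Real.exp (-A * Real.sin φ) with hgdef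
  have hgcont : Continuous g := by fun_prop
  -- Step 1: the norm bound
  have hnorm : ∀ φ ∈ Set.uIoc (0 : ℝ) Real.pi,
      ‖Complex.exp (-(-(1 / 4) - Complex.I * (R : ℂ) * Complex.exp (Complex.I * (φ : ℂ))) *
              (Real.log u : ℂ)) /
            (-(-(1 / 4) - Complex.I * (R : ℂ) * Complex.exp (Complex.I * (φ : ℂ)))) *
            ((R : ℂ) * Complex.exp (Complex.I * (φ : ℂ)))‖ ≤ g φ := by
    intro φ _
    have hE : ‖Complex.exp (Complex.I * (φ : ℂ))‖ = 1 := by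
      simp [Complex.norm_exp]
    have hre : (-(-(1 / 4 : ℂ) - Complex.I * (R : ℂ) * Complex.exp (Complex.I * (φ : ℂ))) *
        (Real.log u : ℂ)).re = (1 / 4 - R * Real.sin φ) * L := by
      have hEeq : Complex.exp (Complex.I * (φ : ℂ)) =
          Complex.ofReal (Real.cos φ) + Complex.ofReal (Real.sin φ) * Complex.I := by
        rw [mul_comm, Complex.exp_mul_I]
        push_cast
        simp
      rw [hEeq]
      simp [Complex.mul_re, Complex.mul_im, Complex.sin_ofReal_re, Complex.cos_ofReal_re,
        Complex.sin_ofReal_im, Complex.cos_ofReal_im]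
      rw [hLdef]; ring
    have hden : (3 / 4 : ℝ) * R ≤ ‖-(-(1 / 4 : ℂ) - Complex.I * (R : ℂ) *
        Complex.exp (Complex.I * (φ : ℂ)))‖ := by
      have h1 : ‖Complex.I * (R : ℂ) * Complex.exp (Complex.I * (φ : ℂ))‖ = R := by
        simp [hE, abs_of_pos hRpos]
      have h2 : ‖Complex.I * (R : ℂ) * Complex.exp (Complex.I * (φ : ℂ))‖
            - ‖(-(1/4) : ℂ)‖ ≤
          ‖Complex.I * (R : ℂ) * Complex.exp (Complex.I * (φ : ℂ)) - (-(1/4) : ℂ)‖ :=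
        norm_sub_norm_le _ _
      have h3 : Complex.I * (R : ℂ) * Complex.exp (Complex.I * (φ : ℂ)) - (-(1/4) : ℂ)
          = -(-(1 / 4 : ℂ) - Complex.I * (R : ℂ) * Complex.exp (Complex.I * (φ : ℂ))) := by
        ring
      have h4 : ‖(-(1/4) : ℂ)‖ = 1/4 := by norm_num
      rw [h3, h1, h4] at h2
      linarith
    rw [norm_mul, norm_div]
    have hexp : ‖Complex.exp (-(-(1 / 4 : ℂ) - Complex.I * (R : ℂ) *
        Complex.exp (Complex.I * (φ : ℂ))) * (Real.log u : ℂ))‖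
        = Real.exp ((1 / 4 - R * Real.sin φ) * L) := by
      rw [Complex.norm_exp, hre]
    have hRE : ‖(R : ℂ) * Complex.exp (Complex.I * (φ : ℂ))‖ = R := by
      simp [hE, abs_of_pos hRpos]
    rw [hexp, hRE]
    have hdenpos : (0 : ℝ) < (3 / 4 : ℝ) * R := by positivity
    have hfrac : Real.exp ((1 / 4 - R * Real.sin φ) * L) /
        ‖-(-(1 / 4 : ℂ) - Complex.I * (R : ℂ) * Complex.exp (Complex.I * (φ : ℂ)))‖
        ≤ Real.exp ((1 / 4 - R * Real.sin φ) * L) / ((3 / 4) * R) :=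
      div_le_div_of_nonneg_left (Real.exp_pos _).le hdenpos hden
    calc Real.exp ((1 / 4 - R * Real.sin φ) * L) /
          ‖-(-(1 / 4 : ℂ) - Complex.I * (R : ℂ) * Complex.exp (Complex.I * (φ : ℂ)))‖ * R
        ≤ Real.exp ((1 / 4 - R * Real.sin φ) * L) / ((3 / 4) * R) * R :=
          mul_le_mul_of_nonneg_right hfrac hRpos.le
      _ = g φ := by
          rw [hgdef, hKdef]
          have : (1 / 4 - R * Real.sin φ) * L = L / 4 + (-A * Real.sin φ) := by
            rw [hAdef]; ring
          rw [this, Real.exp_add]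
          field_simp
  -- Step 2: norm of integral ≤ |∫ g|
  have h2 : ‖∫ φ in (0 : ℝ)..Real.pi,
          Complex.exp (-(-(1 / 4) - Complex.I * (R : ℂ) * Complex.exp (Complex.I * (φ : ℂ))) *
              (Real.log u : ℂ)) /
            (-(-(1 / 4) - Complex.I * (R : ℂ) * Complex.exp (Complex.I * (φ : ℂ)))) *
            ((R : ℂ) * Complex.exp (Complex.I * (φ : ℂ)))‖ ≤
      |∫ φ in (0 : ℝ)..Real.pi, g φ| := by
    apply intervalIntegral.norm_integral_le_abs_of_norm_le
    · exact (ae_restrict_iff' measurableSet_uIoc).mpr (Filter.Eventually.of_forall hnorm)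
    · exact hgcont.intervalIntegrable _ _
  have hgnonneg : ∀ φ, 0 ≤ g φ := fun φ => by positivity
  have habs : |∫ φ in (0 : ℝ)..Real.pi, g φ| = ∫ φ in (0 : ℝ)..Real.pi, g φ :=
    abs_of_nonneg (intervalIntegral.integral_nonneg hπ.le (fun x _ => hgnonneg x))
  rw [habs] at h2
  -- Step 3: bound the g-integral
  have hsplit : (∫ φ in (0 : ℝ)..Real.pi, g φ) =
      (∫ φ in (0 : ℝ)..(Real.pi / 2), g φ) + ∫ φ in (Real.pi / 2)..Real.pi, g φ := by
    rw [intervalIntegral.integral_add_adjacent_intervals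
      (hgcont.intervalIntegrable _ _) (hgcont.intervalIntegrable _ _)]
  have hk0 : -(2 * A / Real.pi) ≠ 0 := neg_ne_zero.mpr (ne_of_gt (by positivity))
  -- first half
  have hb1 : (∫ φ in (0 : ℝ)..(Real.pi / 2), g φ) ≤
      ∫ φ in (0 : ℝ)..(Real.pi / 2), K * Real.exp (-(2 * A / Real.pi) * φ) := by
    apply intervalIntegral.integral_mono_on (by linarith)
      (hgcont.intervalIntegrable _ _) (Continuous.intervalIntegrable (by fun_prop) _ _)
    intro x hx
    apply mul_le_mul_of_nonneg_left _ hK.le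
    apply Real.exp_le_exp.mpr
    have hs : 2 / Real.pi * x ≤ Real.sin x := Real.mul_le_sin hx.1 hx.2
    have h2 := mul_le_mul_of_nonneg_left hs hA.le
    calc -(2 * A / Real.pi) * x = -(A * (2 / Real.pi * x)) := by ring
      _ ≥ -(A * Real.sin x) := neg_le_neg h2
      _ = -A * Real.sin x := by ring
  have hb2 : (∫ φ in (Real.pi / 2)..Real.pi, g φ) ≤
      ∫ φ in (Real.pi / 2)..Real.pi, K * Real.exp (-(2 * A / Real.pi) * (Real.pi - φ)) := by
    apply intervalIntegral.integral_mono_on (by linarith)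
      (hgcont.intervalIntegrable _ _) (Continuous.intervalIntegrable (by fun_prop) _ _)
    intro x hx
    apply mul_le_mul_of_nonneg_left _ hK.le
    apply Real.exp_le_exp.mpr
    have h1 : 2 / Real.pi * (Real.pi - x) ≤ Real.sin (Real.pi - x) :=
      Real.mul_le_sin (by linarith [hx.2]) (by linarith [hx.1])
    rw [Real.sin_pi_sub] at h1
    have h2 := mul_le_mul_of_nonneg_left h1 hA.le
    calc -A * Real.sin x = -(A * Real.sin x) := by ring
      _ ≤ -(A * (2 / Real.pi * (Real.pi - x))) := neg_le_neg h2
      _ = -(2 * A / Real.pi) * (Real.pi - x) := by ring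
  -- compute the two exponential integrals
  have hc1 : (∫ φ in (0 : ℝ)..(Real.pi / 2), K * Real.exp (-(2 * A / Real.pi) * φ)) =
      K * ((Real.exp (-A) - 1) / (-(2 * A / Real.pi))) := by
    rw [intervalIntegral.integral_const_mul, int_exp_mul _ hk0]
    have e1 : -(2 * A / Real.pi) * (Real.pi / 2) = -A := by
      field_simp
    rw [e1, mul_zero, Real.exp_zero]
  have hc2 : (∫ φ in (Real.pi / 2)..Real.pi, K * Real.exp (-(2 * A / Real.pi) * (Real.pi - φ)))
      = K * ((Real.exp (-A) - 1) / (-(2 * A / Real.pi))) := by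
    have heq : ∀ φ : ℝ, K * Real.exp (-(2 * A / Real.pi) * (Real.pi - φ)) =
        (K * Real.exp (-(2 * A))) * Real.exp ((2 * A / Real.pi) * φ) := by
      intro φ
      have hexid : -(2 * A / Real.pi) * (Real.pi - φ) = -(2 * A) + (2 * A / Real.pi) * φ := by
        field_simp
        ring
      rw [hexid, Real.exp_add, ← mul_assoc]
    simp_rw [heq]
    rw [intervalIntegral.integral_const_mul,
      int_exp_mul _ (ne_of_gt (by positivity : (0:ℝ) < 2 * A / Real.pi))]
    have e1 : (2 * A / Real.pi) * Real.pi = 2 * A := by field_simp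
    have e2 : (2 * A / Real.pi) * (Real.pi / 2) = A := by field_simp
    rw [e1, e2]
    have m1 : Real.exp (-(2 * A)) * Real.exp (2 * A) = 1 := by
      rw [← Real.exp_add]; simp
    have m2 : Real.exp (-(2 * A)) * Real.exp A = Real.exp (-A) := by
      rw [← Real.exp_add]; congr 1; ring
    calc K * Real.exp (-(2 * A)) * ((Real.exp (2 * A) - Real.exp A) / (2 * A / Real.pi))
        = K * ((Real.exp (-(2 * A)) * Real.exp (2 * A)
            - Real.exp (-(2 * A)) * Real.exp A) / (2 * A / Real.pi)) := by ring
      _ = K * ((1 - Real.exp (-A)) / (2 * A / Real.pi)) := by rw [m1, m2]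
      _ = K * ((Real.exp (-A) - 1) / (-(2 * A / Real.pi))) := by ring
  -- final assembly
  have hval : K * ((Real.exp (-A) - 1) / (-(2 * A / Real.pi))) =
      K * Real.pi * (1 - Real.exp (-A)) / (2 * A) := by
    field_simp
    ring
  have hfact : 1 - Real.exp (-A) ≤ 2 * (1 - Real.exp (-A / 2)) := by
    have h := Real.exp_le_one_iff.mpr (by linarith : -A/2 ≤ 0)
    have hsq : Real.exp (-A) = Real.exp (-A/2) * Real.exp (-A/2) := by
      rw [← Real.exp_add]; ring_nf
    nlinarith [Real.exp_pos (-A/2)]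
  have hπ315 : Real.pi ≤ 63/20 := by nlinarith [Real.pi_lt_d2]
  have hu14 : Real.exp (L / 4) = u ^ ((1:ℝ)/4) := by
    rw [Real.rpow_def_of_pos (by linarith : (0:ℝ) < u)]
    congr 1
    rw [hLdef]; ring
  have huR2 : Real.exp (-A / 2) = u ^ (-R / 2) := by
    rw [Real.rpow_def_of_pos (by linarith : (0:ℝ) < u)]
    congr 1
    rw [hAdef, hLdef]; ring
  have hE0 : 0 ≤ 1 - Real.exp (-A / 2) := by
    have := Real.exp_le_one_iff.mpr (by linarith : -A / 2 ≤ 0)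
    linarith
  have hF0 : 0 ≤ 1 - Real.exp (-A) := by
    have := Real.exp_le_one_iff.mpr (by linarith : -A ≤ 0)
    linarith
  have hchain : (∫ φ in (0 : ℝ)..Real.pi, g φ) ≤
      K * Real.pi * (1 - Real.exp (-A)) / A := by
    rw [hsplit]
    calc (∫ φ in (0 : ℝ)..(Real.pi / 2), g φ) + ∫ φ in (Real.pi / 2)..Real.pi, g φ
        ≤ K * ((Real.exp (-A) - 1) / (-(2 * A / Real.pi)))
          + K * ((Real.exp (-A) - 1) / (-(2 * A / Real.pi))) :=
          add_le_add (hb1.trans_eq hc1) (hb2.trans_eq hc2)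
      _ = K * Real.pi * (1 - Real.exp (-A)) / A := by
          field_simp
          ring
  have hX : (0:ℝ) < u ^ ((1:ℝ)/4) := by positivity
  have h9 : K * Real.pi * (1 - Real.exp (-A)) ≤
      9 * u ^ ((1:ℝ)/4) * (1 - Real.exp (-A / 2)) := by
    rw [hKdef, hu14]
    set X := u ^ ((1:ℝ)/4)
    set E := 1 - Real.exp (-A / 2)
    have hXE : 0 ≤ X * E := mul_nonneg hX.le hE0
    calc 4 / 3 * X * Real.pi * (1 - Real.exp (-A))
        ≤ 4 / 3 * X * Real.pi * (2 * E) := by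
          have := mul_le_mul_of_nonneg_left hfact
            (show (0:ℝ) ≤ 4 / 3 * X * Real.pi by positivity)
          linarith
      _ = 8 / 3 * Real.pi * (X * E) := by ring
      _ ≤ 8 / 3 * (63/20) * (X * E) := by
          have := mul_le_mul_of_nonneg_right hπ315 hXE
          linarith
      _ ≤ 9 * (X * E) := mul_le_mul_of_nonneg_right (by norm_num) hXE
      _ = 9 * X * E := by ring
  have hfinal : K * Real.pi * (1 - Real.exp (-A)) / A ≤
      9 * u ^ ((1:ℝ)/4) * (1 - u ^ (-R / 2)) / (R * L) := by
    rw [← huR2, ← hAdef]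
    exact (div_le_div_iff_of_pos_right hA).mpr h9
  calc _ ≤ (∫ φ in (0 : ℝ)..Real.pi, g φ) := h2
    _ ≤ K * Real.pi * (1 - Real.exp (-A)) / A := hchain
    _ ≤ 9 * u ^ ((1:ℝ)/4) * (1 - u ^ (-R / 2)) / (R * L) := hfinal
end

section
/- Let k be a positive integer and let T_k be the k × k symmetric tridiagonal matrix with every diagonal entry equal to −1, every entry on the first super- and sub-diagonal equal to 1/2, and all other entries 0. Then T_k is invertible and its inverse satisfies (T_k^{−1})_{i,j} = 2 i (j − k − 1)/(k + 1) for all indices 1 ≤ i ≤ j ≤ k (indices starting from 1), and (T_k^{−1})_{i,j} = (T_k^{−1})_{j,i} for all i, j. -/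
private lemma sum_delta {k : ℕ} (g : Fin k → ℝ) (m : ℕ) :
    ∑ l : Fin k, (if (l : ℕ) = m then g l else 0) =
      if h : m < k then g ⟨m, h⟩ else 0 := by
  split_ifs with h
  · rw [Finset.sum_eq_single ⟨m, h⟩]
    · simp
    · intro l _ hl
      rw [if_neg]
      intro hc
      exact hl (Fin.ext (by simpa using hc))
    · simp
  · apply Finset.sum_eq_zero
    intro l _
    rw [if_neg]
    omega

private lemma sum_delta' {k : ℕ} (g : Fin k → ℝ) (m : ℕ) :
    ∑ l : Fin k, (if (l : ℕ) + 1 = m then g l else 0) =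
      if h : m - 1 < k ∧ 1 ≤ m then g ⟨m - 1, h.1⟩ else 0 := by
  split_ifs with h
  · rw [Finset.sum_eq_single ⟨m - 1, h.1⟩]
    · rw [if_pos]
      simp only [Fin.val_mk]
      omega
    · intro l _ hl
      rw [if_neg]
      intro hc
      apply hl
      apply Fin.ext
      simp only [Fin.val_mk]
      omega
    · simp
  · apply Finset.sum_eq_zero
    intro l _
    rw [if_neg]
    have := l.isLt
    omega

/-- The `k × k` symmetric tridiagonal matrix `T_k` with diagonal entries `-1` and
entries `1/2` on the first super- and sub-diagonals is invertible, with inverse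
`(T_k⁻¹)_{i,j} = 2i(j-k-1)/(k+1)` for `1 ≤ i ≤ j ≤ k` (1-based indexing; here
`i j : Fin k` are the 0-based indices, so `i+1`, `j+1` are the 1-based ones),
and the inverse is symmetric. -/
theorem inv_tridiagonal (k : ℕ) (hk : 0 < k) (T : Matrix (Fin k) (Fin k) ℝ)
    (hT : ∀ i j : Fin k, T i j =
      if (i : ℕ) = j then -1
      else if (i : ℕ) + 1 = j ∨ (j : ℕ) + 1 = i then 1 / 2 else 0) :
    IsUnit T ∧
      (∀ i j : Fin k, (i : ℕ) ≤ j →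
        T⁻¹ i j = 2 * ((i : ℝ) + 1) * (((j : ℝ) + 1) - k - 1) / ((k : ℝ) + 1)) ∧
      (∀ i j : Fin k, T⁻¹ i j = T⁻¹ j i) := by
  have hk1 : (k : ℝ) + 1 ≠ 0 := by positivity
  set S : Matrix (Fin k) (Fin k) ℝ := Matrix.of fun i j =>
    if (i : ℕ) ≤ (j : ℕ) then 2 * ((i : ℝ) + 1) * ((j : ℝ) - k) / ((k : ℝ) + 1)
    else 2 * ((j : ℝ) + 1) * ((i : ℝ) - k) / ((k : ℝ) + 1) with hS
  have hTS : T * S = 1 := by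
    ext i j
    rw [Matrix.mul_apply, Matrix.one_apply]
    have key : ∀ l : Fin k, T i l * S l j =
        -(if (l : ℕ) = (i : ℕ) then S l j else 0)
        + (1/2) * (if (l : ℕ) = (i : ℕ) + 1 then S l j else 0)
        + (1/2) * (if (l : ℕ) + 1 = (i : ℕ) then S l j else 0) := by
      intro l
      rw [hT]
      split_ifs <;> first | ring1 | (exfalso; omega)
    rw [Finset.sum_congr rfl (fun l _ => key l)]
    rw [Finset.sum_add_distrib, Finset.sum_add_distrib, Finset.sum_neg_distrib,
      ← Finset.mul_sum, ← Finset.mul_sum, sum_delta, sum_delta, sum_delta']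
    obtain ⟨a, ha⟩ := i
    obtain ⟨b, hb⟩ := j
    simp only [Fin.val_mk, Fin.mk.injEq]
    rw [dif_pos ha]
    rcases eq_or_ne a 0 with rfl | ha0
    · rw [dif_neg (show ¬(0 - 1 < k ∧ 1 ≤ 0) by omega)]
      rcases Nat.lt_or_ge (0 + 1) k with h1 | h1
      · rw [dif_pos h1]
        simp only [hS, Matrix.of_apply, Fin.val_mk]
        rcases eq_or_ne b 0 with rfl | hb0 <;>
          split_ifs <;>
            first
              | (exfalso; omega)
              | (push_cast; field_simp; ring1)
      · have hke : k = 1 := by omega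
        subst hke
        have hbe : b = 0 := by omega
        subst hbe
        rw [dif_neg (by omega)]
        simp only [hS, Matrix.of_apply, Fin.val_mk]
        norm_num
    · obtain ⟨c, rfl⟩ : ∃ c, a = c + 1 := ⟨a - 1, by omega⟩
      rw [dif_pos (show c + 1 - 1 < k ∧ 1 ≤ c + 1 from ⟨by omega, by omega⟩)]
      rcases Nat.lt_or_ge (c + 1 + 1) k with h1 | h1
      · rw [dif_pos h1]
        simp only [hS, Matrix.of_apply, Fin.val_mk, Nat.add_sub_cancel]
        have hcase : b < c ∨ b = c ∨ b = c + 1 ∨ c + 2 ≤ b := by omega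
        rcases hcase with h2 | rfl | rfl | h2 <;>
          split_ifs <;>
            first
              | (exfalso; omega)
              | (push_cast; field_simp; ring1)
      · have hke : k = c + 2 := by omega
        subst hke
        rw [dif_neg (show ¬(c + 1 + 1 < c + 2) by omega)]
        simp only [hS, Matrix.of_apply, Fin.val_mk, Nat.add_sub_cancel]
        have hcase : b < c ∨ b = c ∨ b = c + 1 := by omega
        rcases hcase with h2 | rfl | rfl <;>
          split_ifs <;>
            first
              | (exfalso; omega)
              | (push_cast; field_simp; ring1)
  have hunit : IsUnit T := by
    rw [Matrix.isUnit_iff_isUnit_det]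
    exact Matrix.isUnit_det_of_right_inverse hTS
  have hinv : T⁻¹ = S := Matrix.inv_eq_right_inv hTS
  refine ⟨hunit, ?_, ?_⟩
  · intro i j hij
    rw [hinv]
    simp only [hS, Matrix.of_apply, if_pos hij]
    ring
  · intro i j
    rw [hinv]
    simp only [hS, Matrix.of_apply]
    split_ifs with h1 h2 h3
    · have h' : ((i : ℕ) : ℝ) = ((j : ℕ) : ℝ) := by
        exact_mod_cast le_antisymm h1 h2
      rw [h']
    · rfl
    · rfl
    · omega
end

section
/- Let m be a positive integer and let H_m be the m × m symmetric tridiagonal matrix whose diagonal entries are H_{i,i} = −1 for 1 ≤ i ≤ m − 1 and H_{m,m} = −1/2, whose entries on the first super- and sub-diagonal all equal 1/2, and whose remaining entries are 0. Then H_m is negative definite: for every nonzero vector v ∈ ℝ^m, vᵀ H_m v < 0. -/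
open Matrix

open Finset in

private lemma key (n : ℕ) (w : ℕ → ℝ) :
    ∑ i ∈ range (n+1), ∑ j ∈ range (n+1), w i * w j *
      (if i = j then (if i = n then -(1/2:ℝ) else -1)
       else if i + 1 = j ∨ j + 1 = i then 1/2 else 0)
    = -(1/2) * ((w 0)^2 + ∑ i ∈ range n, (w i - w (i+1))^2) := by
  have hc : ∀ i j : ℕ, w i * w j *
      (if i = j then (if i = n then -(1/2:ℝ) else -1)
       else if i + 1 = j ∨ j + 1 = i then 1/2 else 0)
      = (if j = i then w i * w i * (if i = n then -(1/2:ℝ) else -1) else 0)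
        + (if j = i + 1 then w i * w j * (1/2) else 0)
        + (if j + 1 = i then w i * w j * (1/2) else 0) := by
    intro i j
    split_ifs <;> (first | ring1 | (subst_vars; ring1) | (exfalso; omega))
  have h1 : ∑ i ∈ range (n+1), ∑ j ∈ range (n+1), w i * w j *
      (if i = j then (if i = n then -(1/2:ℝ) else -1)
       else if i + 1 = j ∨ j + 1 = i then 1/2 else 0)
      = (∑ i ∈ range (n+1), w i * w i * (if i = n then -(1/2:ℝ) else -1))
        + (∑ i ∈ range n, w i * w (i+1) * (1/2))
        + (∑ i ∈ range n, w (i+1) * w i * (1/2)) := by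
    have step1 : ∀ i ∈ range (n+1), ∑ j ∈ range (n+1), w i * w j *
        (if i = j then (if i = n then -(1/2:ℝ) else -1)
         else if i + 1 = j ∨ j + 1 = i then 1/2 else 0)
        = (∑ j ∈ range (n+1), (if j = i then w i * w i * (if i = n then -(1/2:ℝ) else -1) else 0))
          + (∑ j ∈ range (n+1), (if j = i + 1 then w i * w j * (1/2) else 0))
          + (∑ j ∈ range (n+1), (if j + 1 = i then w i * w j * (1/2) else 0)) := by
      intro i _
      rw [← Finset.sum_add_distrib, ← Finset.sum_add_distrib]
      exact Finset.sum_congr rfl fun j _ => hc i j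
    rw [Finset.sum_congr rfl step1, Finset.sum_add_distrib, Finset.sum_add_distrib]
    congr 1
    · congr 1
      · -- diagonal part
        refine Finset.sum_congr rfl fun i hi => ?_
        rw [Finset.sum_ite_eq' (range (n+1)) i
          (fun _ => w i * w i * (if i = n then -(1/2:ℝ) else -1)), if_pos hi]
      · -- superdiagonal part
        have : ∀ i ∈ range (n+1), (∑ j ∈ range (n+1), (if j = i + 1 then w i * w j * (1/2) else 0))
            = if i + 1 ∈ range (n+1) then w i * w (i+1) * (1/2) else 0 :=
          fun i _ => Finset.sum_ite_eq' (range (n+1)) (i+1) (fun j => w i * w j * (1/2))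
        rw [Finset.sum_congr rfl this, Finset.sum_range_succ,
          if_neg (by simp), add_zero]
        exact Finset.sum_congr rfl fun i hi => by
          rw [if_pos (Finset.mem_range.mpr (by
            have := Finset.mem_range.mp hi; omega))]
    · -- subdiagonal part
      rw [Finset.sum_comm]
      have this2 : ∀ j ∈ range (n+1), (∑ i ∈ range (n+1), (if j + 1 = i then w i * w j * (1/2) else 0))
          = if j + 1 ∈ range (n+1) then w (j+1) * w j * (1/2) else 0 :=
        fun j _ => Finset.sum_ite_eq (range (n+1)) (j+1) (fun i => w i * w j * (1/2))
      rw [Finset.sum_congr rfl this2, Finset.sum_range_succ,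
        if_neg (by simp), add_zero]
      exact Finset.sum_congr rfl fun j hj => by
        rw [if_pos (Finset.mem_range.mpr (by
          have := Finset.mem_range.mp hj; omega))]
  rw [h1]
  have hD : (∑ i ∈ range (n+1), w i * w i * (if i = n then -(1/2:ℝ) else -1))
      = (∑ i ∈ range n, -(w i * w i)) + w n * w n * (-(1/2)) := by
    rw [Finset.sum_range_succ]
    congr 1
    · exact Finset.sum_congr rfl fun i hi => by
        rw [if_neg (by simpa using Nat.ne_of_lt (Finset.mem_range.mp hi))]; ring
    · rw [if_pos rfl]
  rw [hD]
  have hsq : ∑ i ∈ range n, (w i - w (i+1))^2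
      = (∑ i ∈ range n, w i ^ 2) - 2 * (∑ i ∈ range n, w i * w (i+1))
        + ((∑ i ∈ range n, w i ^ 2) + w n ^ 2 - w 0 ^ 2) := by
    have ha : ∑ i ∈ range n, (w i - w (i+1))^2
        = ∑ i ∈ range n, (w i ^ 2 - 2 * (w i * w (i+1)) + w (i+1) ^ 2) :=
      Finset.sum_congr rfl fun i _ => by ring
    rw [ha, Finset.sum_add_distrib, Finset.sum_sub_distrib, ← Finset.mul_sum]
    have h2 := Finset.sum_range_succ' (fun i => w i ^ 2) n
    have h3 := Finset.sum_range_succ (fun i => w i ^ 2) n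
    linarith
  rw [hsq]
  have e1 : (∑ i ∈ range n, -(w i * w i)) = -∑ i ∈ range n, w i ^ 2 := by
    rw [← Finset.sum_neg_distrib]
    exact Finset.sum_congr rfl fun i _ => by ring
  have e2 : (∑ i ∈ range n, w i * w (i+1) * (1/2)) = (1/2) * ∑ i ∈ range n, w i * w (i+1) := by
    rw [Finset.mul_sum]; exact Finset.sum_congr rfl fun i _ => by ring
  have e3 : (∑ i ∈ range n, w (i+1) * w i * (1/2)) = (1/2) * ∑ i ∈ range n, w i * w (i+1) := by
    rw [Finset.mul_sum]; exact Finset.sum_congr rfl fun i _ => by ring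
  rw [e1, e2, e3]; ring

/-- The `m × m` symmetric tridiagonal matrix `H_m` with diagonal entries `-1` except for
the last one which is `-1/2`, and entries `1/2` on the first super- and sub-diagonals,
is negative definite: `vᵀ H_m v < 0` for every nonzero `v ∈ ℝ^m`. -/
theorem hessian_negative_definite (m : ℕ) (hm : 0 < m) (H : Matrix (Fin m) (Fin m) ℝ)
    (hH : ∀ i j : Fin m, H i j =
      if (i : ℕ) = j then (if (i : ℕ) = m - 1 then -(1 / 2) else -1)
      else if (i : ℕ) + 1 = j ∨ (j : ℕ) + 1 = i then 1 / 2 else 0) :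
    ∀ v : Fin m → ℝ, v ≠ 0 → v ⬝ᵥ (H *ᵥ v) < 0 := by
  obtain ⟨n, rfl⟩ := Nat.exists_eq_succ_of_ne_zero hm.ne'
  intro v hv
  set w : ℕ → ℝ := fun k => if h : k < n + 1 then v ⟨k, h⟩ else 0 with hw
  have hvw : ∀ i : Fin (n+1), v i = w ↑i := fun i => by
    simp [hw, i.isLt]
    intro h; have := i.isLt; omega
  have hQ : v ⬝ᵥ (H *ᵥ v) = ∑ i ∈ Finset.range (n+1), ∑ j ∈ Finset.range (n+1),
      w i * w j * (if i = j then (if i = n then -(1/2:ℝ) else -1)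
        else if i + 1 = j ∨ j + 1 = i then 1/2 else 0) := by
    calc v ⬝ᵥ (H *ᵥ v)
        = ∑ i : Fin (n+1), ∑ j : Fin (n+1), w ↑i * w ↑j *
            (if (i:ℕ) = (j:ℕ) then (if (i:ℕ) = n then -(1/2:ℝ) else -1)
             else if (i:ℕ) + 1 = (j:ℕ) ∨ (j:ℕ) + 1 = (i:ℕ) then 1/2 else 0) := by
          have hH' : ∀ i j : Fin (n+1), H i j =
              (if (i:ℕ) = (j:ℕ) then (if (i:ℕ) = n then -(1/2:ℝ) else -1)
               else if (i:ℕ) + 1 = (j:ℕ) ∨ (j:ℕ) + 1 = (i:ℕ) then 1/2 else 0) := by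
            intro i j
            rw [hH i j]
            norm_num
          simp only [dotProduct, mulVec, Finset.mul_sum]
          refine Finset.sum_congr rfl fun i _ => Finset.sum_congr rfl fun j _ => ?_
          rw [hH' i j, hvw i, hvw j]
          ring
      _ = ∑ i : Fin (n+1), ∑ j ∈ Finset.range (n+1), w ↑i * w j *
            (if (i:ℕ) = j then (if (i:ℕ) = n then -(1/2:ℝ) else -1)
             else if (i:ℕ) + 1 = j ∨ j + 1 = (i:ℕ) then 1/2 else 0) :=
          Finset.sum_congr rfl fun i _ => Fin.sum_univ_eq_sum_range
            (fun j => w ↑i * w j *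
              (if (i:ℕ) = j then (if (i:ℕ) = n then -(1/2:ℝ) else -1)
               else if (i:ℕ) + 1 = j ∨ j + 1 = (i:ℕ) then 1/2 else 0)) (n+1)
      _ = _ := Fin.sum_univ_eq_sum_range
            (fun i => ∑ j ∈ Finset.range (n+1), w i * w j *
              (if i = j then (if i = n then -(1/2:ℝ) else -1)
               else if i + 1 = j ∨ j + 1 = i then 1/2 else 0)) _
  rw [hQ, key n w]
  have hS : (0:ℝ) ≤ ∑ i ∈ Finset.range n, (w i - w (i+1))^2 :=
    Finset.sum_nonneg fun i _ => sq_nonneg _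
  have hpos : 0 < (w 0)^2 + ∑ i ∈ Finset.range n, (w i - w (i+1))^2 := by
    rcases lt_or_eq_of_le (by positivity :
        (0:ℝ) ≤ (w 0)^2 + ∑ i ∈ Finset.range n, (w i - w (i+1))^2) with h | h
    · exact h
    · exfalso; apply hv
      have h0 : (w 0)^2 = 0 := by nlinarith [sq_nonneg (w 0)]
      have hS0 : ∑ i ∈ Finset.range n, (w i - w (i+1))^2 = 0 := by nlinarith
      have hall := (Finset.sum_eq_zero_iff_of_nonneg
        (fun i _ => sq_nonneg (w i - w (i+1)))).mp hS0
      have hwk : ∀ k, k ≤ n → w k = 0 := by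
        intro k
        induction k with
        | zero => intro _; exact sq_eq_zero_iff.mp h0
        | succ k ih =>
          intro hk
          have h1 := hall k (Finset.mem_range.mpr (by omega))
          have h2 := ih (by omega)
          have h3 := sq_eq_zero_iff.mp h1
          linarith
      funext i
      show v i = 0
      rw [hvw i]
      exact hwk ↑i (by omega)
  linarith
end

section
/- Let m be a positive integer and define Φ : (0,∞)^m → ℝ by Φ(x_1, …, x_m) = 2 log x_1 − 2 log(1 + x_1) − log x_m − 2 Σ_{l=1}^{m−1} log(1 + x_l/x_{l+1}). Then on the domain D = {x ∈ (0,∞)^m : x_m ≥ 1}, Φ attains its maximum uniquely at the point p = (1, 1, …, 1): Φ(p) = −2m log 2, and Φ(x) < −2m log 2 for every x ∈ D with x ≠ p. -/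
lemma key_le (a b : ℝ) (ha : 0 < a) (hb : 0 < b) :
    2 * Real.log 2 + Real.log a - Real.log b ≤ 2 * Real.log (1 + a / b) := by
  have hr : 0 < a / b := div_pos ha hb
  have h1 : Real.log a - Real.log b = Real.log (a / b) := (Real.log_div ha.ne' hb.ne').symm
  have h2 : 2 * Real.log 2 + Real.log (a / b) = Real.log (4 * (a / b)) := by
    rw [Real.log_mul (by norm_num) hr.ne', show (4:ℝ) = 2 ^ 2 by norm_num, Real.log_pow]
    push_cast; ring
  have h3 : 2 * Real.log (1 + a / b) = Real.log ((1 + a / b) ^ 2) := by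
    rw [Real.log_pow]; push_cast; ring
  have h5 : (4 : ℝ) * (a / b) ≤ (1 + a / b) ^ 2 := by nlinarith [sq_nonneg (a / b - 1)]
  have h4 : Real.log (4 * (a / b)) ≤ Real.log ((1 + a / b) ^ 2) :=
    Real.log_le_log (by positivity) h5
  linarith

lemma key_lt (a b : ℝ) (ha : 0 < a) (hb : 0 < b) (hab : a ≠ b) :
    2 * Real.log 2 + Real.log a - Real.log b < 2 * Real.log (1 + a / b) := by
  have hr : 0 < a / b := div_pos ha hb
  have h1 : Real.log a - Real.log b = Real.log (a / b) := (Real.log_div ha.ne' hb.ne').symm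
  have h2 : 2 * Real.log 2 + Real.log (a / b) = Real.log (4 * (a / b)) := by
    rw [Real.log_mul (by norm_num) hr.ne', show (4:ℝ) = 2 ^ 2 by norm_num, Real.log_pow]
    push_cast; ring
  have h3 : 2 * Real.log (1 + a / b) = Real.log ((1 + a / b) ^ 2) := by
    rw [Real.log_pow]; push_cast; ring
  have hne : a / b ≠ 1 := by
    intro h; exact hab (by field_simp at h; linarith)
  have h5 : (4 : ℝ) * (a / b) < (1 + a / b) ^ 2 := by
    have := sq_pos_of_ne_zero (sub_ne_zero.2 hne)
    nlinarith
  have h4 : Real.log (4 * (a / b)) < Real.log ((1 + a / b) ^ 2) :=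
    Real.log_lt_log (by positivity) h5
  linarith


/-- On the domain `D = {x ∈ (0,∞)^m : x_m ≥ 1}`, the function
`Φ(x) = 2 log x₁ - 2 log(1+x₁) - log x_m - 2 Σ_{l=1}^{m-1} log(1 + x_l/x_{l+1})`
attains its maximum `Φ(1,…,1) = -2m log 2` uniquely at `p = (1,…,1)`.
Coordinate `i : Fin m` of `x` plays the role of `x_{i+1}`. -/
theorem phi_unique_maximum (m : ℕ) (hm : 0 < m) (Φ : (Fin m → ℝ) → ℝ)
    (hΦ : ∀ x : Fin m → ℝ, Φ x =
      2 * Real.log (x ⟨0, hm⟩) - 2 * Real.log (1 + x ⟨0, hm⟩) -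
        Real.log (x ⟨m - 1, Nat.sub_lt hm one_pos⟩) -
        2 * ∑ l : Fin (m - 1),
          Real.log (1 + x ⟨l.1, by have := l.2; omega⟩ / x ⟨l.1 + 1, by have := l.2; omega⟩)) :
    Φ (fun _ => 1) = -(2 * m * Real.log 2) ∧
      ∀ x : Fin m → ℝ, (∀ i, 0 < x i) → 1 ≤ x ⟨m - 1, Nat.sub_lt hm one_pos⟩ →
        x ≠ (fun _ => 1) → Φ x < -(2 * m * Real.log 2) := by
  obtain ⟨n, rfl⟩ : ∃ n, m = n + 1 := ⟨m - 1, by omega⟩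
  simp only [Nat.add_sub_cancel] at hΦ ⊢
  have hxeq : ∀ (x : Fin (n+1) → ℝ) (a b : ℕ) (ha : a < n+1) (hb : b < n+1), a = b →
      x ⟨a, ha⟩ = x ⟨b, hb⟩ := by
    intro x a b ha hb h; subst h; rfl
  constructor
  · rw [hΦ]
    simp only [Real.log_one, div_one]
    rw [Finset.sum_const, Finset.card_univ, Fintype.card_fin]
    have : (1:ℝ) + 1 = 2 := by norm_num
    rw [this]
    push_cast
    ring
  · intro x hx _ hne
    rw [hΦ]
    -- base inequality for the first term
    have hbase : 2 * Real.log (x ⟨0, hm⟩) - 2 * Real.log (1 + x ⟨0, hm⟩) ≤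
        -(2 * Real.log 2) + Real.log (x ⟨0, hm⟩) := by
      have := key_le (x ⟨0, hm⟩) 1 (hx _) one_pos
      simp only [Real.log_one, div_one] at this
      linarith
    have hbase_lt : x ⟨0, hm⟩ ≠ 1 →
        2 * Real.log (x ⟨0, hm⟩) - 2 * Real.log (1 + x ⟨0, hm⟩) <
        -(2 * Real.log 2) + Real.log (x ⟨0, hm⟩) := by
      intro h
      have := key_lt (x ⟨0, hm⟩) 1 (hx _) one_pos h
      simp only [Real.log_one, div_one] at this
      linarith
    set g : Fin n → ℝ := fun l =>
      2 * Real.log 2 + Real.log (x ⟨l.1, by omega⟩) -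
        Real.log (x ⟨l.1 + 1, by omega⟩) with hg
    set G : Fin n → ℝ := fun l =>
      Real.log (1 + x ⟨l.1, by omega⟩ / x ⟨l.1 + 1, by omega⟩) with hG
    have hstep : ∀ l : Fin n, g l ≤ 2 * G l := fun l => key_le _ _ (hx _) (hx _)
    show 2 * Real.log (x ⟨0, hm⟩) - 2 * Real.log (1 + x ⟨0, hm⟩) -
        Real.log (x ⟨n, Nat.lt_succ_self n⟩) - 2 * ∑ l : Fin n, G l <
        -(2 * ((n + 1 : ℕ) : ℝ) * Real.log 2)
    -- telescoping value of ∑ g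
    have htele : ∑ l : Fin n, g l =
        (n : ℝ) * (2 * Real.log 2) + (Real.log (x ⟨0, hm⟩) -
          Real.log (x ⟨n, by omega⟩)) := by
      have hf : ∀ l : Fin n, g l = 2 * Real.log 2 +
          (Real.log (x ⟨min l.1 n, by omega⟩) - Real.log (x ⟨min (l.1+1) n, by omega⟩)) := by
        intro l
        have h1 : x ⟨min l.1 n, by omega⟩ = x ⟨l.1, by omega⟩ :=
          hxeq x _ _ _ _ (by have := l.2; omega)
        have h2 : x ⟨min (l.1+1) n, by omega⟩ = x ⟨l.1 + 1, by omega⟩ :=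
          hxeq x _ _ _ _ (by have := l.2; omega)
        rw [hg, h1, h2]
        ring
      rw [Finset.sum_congr rfl (fun l _ => hf l), Finset.sum_add_distrib,
        Finset.sum_const, Finset.card_univ, Fintype.card_fin,
        Fin.sum_univ_eq_sum_range
          (fun i => Real.log (x ⟨min i n, by omega⟩) - Real.log (x ⟨min (i+1) n, by omega⟩)),
        Finset.sum_range_sub' (fun i => Real.log (x ⟨min i n, by omega⟩)) n]
      have e0 : x ⟨min 0 n, by omega⟩ = x ⟨0, hm⟩ := hxeq x _ _ _ _ (by omega)
      have en : x ⟨min n n, by omega⟩ = x ⟨n, by omega⟩ := hxeq x _ _ _ _ (by omega)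
      rw [e0, en, nsmul_eq_mul]
    -- strictness case analysis
    have hsum_le : ∑ l : Fin n, g l ≤ 2 * ∑ l : Fin n, G l := by
      rw [Finset.mul_sum]
      exact Finset.sum_le_sum (fun l _ => hstep l)
    by_cases h0 : x ⟨0, hm⟩ = 1
    · -- some consecutive pair must differ
      have hex : ∃ l : Fin n, x ⟨l.1, by omega⟩ ≠ x ⟨l.1 + 1, by omega⟩ := by
        by_contra hc
        push_neg at hc
        apply hne
        have hall : ∀ k, (hk : k < n + 1) → x ⟨k, hk⟩ = 1 := by
          intro k
          induction k with
          | zero => intro hk; exact h0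
          | succ k ih =>
            intro hk
            have hkn : k < n := by omega
            have := hc ⟨k, hkn⟩
            simp only at this
            rw [← hxeq x (k+1) (k+1) (by omega) hk rfl, ← this]
            exact ih (by omega)
        funext i
        have := hall i.1 i.2
        simpa using this
      obtain ⟨l₀, hl₀⟩ := hex
      have hsum_lt : ∑ l : Fin n, g l < 2 * ∑ l : Fin n, G l := by
        rw [Finset.mul_sum]
        apply Finset.sum_lt_sum (fun l _ => hstep l)
        exact ⟨l₀, Finset.mem_univ _, key_lt _ _ (hx _) (hx _) hl₀⟩
      rw [htele] at hsum_lt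
      push_cast
      linarith
    · have := hbase_lt h0
      rw [htele] at hsum_le
      push_cast
      linarith
end
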